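/- Let R be an integral domain of finite character (every nonzero element lies in only finitely many maximal ideals). If for each maximal ideal M of R every nonzero ideal of R_M is divisible by only finitely many ideals of R_M, then every nonzero ideal of R is divisible by only finitely many ideals of R. -/

import Mathlib

/-- If a domain `R` has finite character and, for every maximal ideal `M`,
every nonzero ideal of `R_M` has finitely many divisors, then every nonzero
ideal of `R` has finitely many divisors. -/
theorem stmt_18 {R : Type*} [CommRing R] [IsDomain R]
    (hfc : ∀ r : R, r ≠ 0 → {M : Ideal R | M.IsMaximal ∧ r ∈ M}.Finite)
    (hloc : ∀ (M : Ideal R) (hM : M.IsMaximal),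
      ∀ I : Ideal (@Localization.AtPrime R _ M hM.isPrime), I ≠ ⊥ →
        {J : Ideal (@Localization.AtPrime R _ M hM.isPrime) |
          ∃ K, I = J * K}.Finite) :
    ∀ I : Ideal R, I ≠ ⊥ →
      {J : Ideal R | ∃ K : Ideal R, I = J * K}.Finite := by
  intro I hI
  obtain ⟨r, hrI, hr0⟩ := Submodule.exists_mem_ne_zero_of_ne_bot hI
  set S := {M : Ideal R | M.IsMaximal ∧ r ∈ M} with hSdef
  have hS : S.Finite := hfc r hr0
  have : Finite S := hS.to_subtype
  -- the map to tuples of localizations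
  set F : Ideal R → ∀ M : S, Ideal ((@Localization.AtPrime R _ M.1 M.2.1.isPrime)) :=
    fun J M => J.map (algebraMap R _) with hF
  have hinj : Set.InjOn F {J : Ideal R | ∃ K : Ideal R, I = J * K} := by
    intro J1 hJ1 J2 hJ2 heq
    obtain ⟨K1, hK1⟩ := hJ1
    obtain ⟨K2, hK2⟩ := hJ2
    have hrJ : ∀ J K : Ideal R, I = J * K → r ∈ J := by
      intro J K h
      exact Ideal.mul_le_left (h ▸ hrI : r ∈ J * K)
    apply Ideal.eq_of_localization_maximal
    intro P hP
    by_cases hPS : P ∈ S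
    · exact congrFun heq ⟨P, hPS⟩
    · have hrP : r ∉ P := fun h => hPS ⟨hP, h⟩
      have htop : ∀ J K : Ideal R, I = J * K →
          J.map (algebraMap R (Localization.AtPrime P)) = ⊤ := by
        intro J K h
        apply Ideal.eq_top_of_isUnit_mem _
          (Ideal.mem_map_of_mem _ (hrJ J K h))
        exact IsLocalization.map_units (M := P.primeCompl) _ ⟨r, hrP⟩
      rw [htop J1 K1 hK1, htop J2 K2 hK2]
  have himage : F '' {J : Ideal R | ∃ K : Ideal R, I = J * K} ⊆
      Set.pi Set.univ (fun M : S =>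
        {J : Ideal ((@Localization.AtPrime R _ M.1 M.2.1.isPrime)) |
          ∃ K, I.map (algebraMap R _) = J * K}) := by
    rintro _ ⟨J, ⟨K, hK⟩, rfl⟩ M _
    exact ⟨K.map (algebraMap R _), by rw [hK, Ideal.map_mul]⟩
  have hfin : (Set.pi Set.univ (fun M : S =>
      {J : Ideal ((@Localization.AtPrime R _ M.1 M.2.1.isPrime)) |
        ∃ K, I.map (algebraMap R _) = J * K})).Finite := by
    apply Set.Finite.pi
    intro M
    apply hloc M.1 M.2.1
    intro hbot
    have heq0 : algebraMap R ((@Localization.AtPrime R _ M.1 M.2.1.isPrime)) r = 0 := by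
      have := Ideal.mem_map_of_mem (algebraMap R
        ((@Localization.AtPrime R _ M.1 M.2.1.isPrime))) hrI
      rw [hbot] at this
      simpa using this
    haveI : M.1.IsPrime := M.2.1.isPrime
    refine hr0 (IsLocalization.injective
      (@Localization.AtPrime R _ M.1 M.2.1.isPrime)
      (M.1.primeCompl_le_nonZeroDivisors) ?_)
    rw [heq0, map_zero]
  exact Set.Finite.of_finite_image (hfin.subset himage) hinj
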